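/- Let n ≥ 2, let L be a real symmetric n×n matrix all of whose rows sum to zero such that the submatrix L̃ (obtained by deleting the last row and column) is invertible, and let R be the associated effective-resistance matrix. Consider the n×n matrix t·J − (1/2)·R, where J is the all-ones matrix and t is an indeterminate; its determinant is a polynomial of degree at most 1 in t. Then the coefficient of t in det(t·J − (1/2)·R) equals 1/det(L̃). -/

import Mathlib

open Matrix BigOperators Polynomial

/-- With `L`, `Ltil`, `Linv`, `R` as in the effective-resistance setup,
the determinant of the matrix `t·J − (1/2)·R` (whose `(i,j)` entry is the polynomial
`t − R i j / 2`) is a polynomial of degree at most `1` in `t`, and the coefficient of `t`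
equals `1 / det Ltil`. -/
theorem coeff_one_det_tJ_sub_half_R (n : ℕ) (hn : 2 ≤ n)
    (L : Matrix (Fin n) (Fin n) ℝ)
    (hsymm : L.IsSymm)
    (hrow : ∀ i, ∑ j, L i j = 0)
    (Ltil : Matrix (Fin (n-1)) (Fin (n-1)) ℝ)
    (hLtil : ∀ i j : Fin (n-1), Ltil i j
      = L (Fin.castLE (Nat.sub_le n 1) i) (Fin.castLE (Nat.sub_le n 1) j))
    (hinv : IsUnit Ltil)
    (Linv : Matrix (Fin n) (Fin n) ℝ)
    (hLinv : ∀ i j : Fin n, Linv i j =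
      if h : (i : ℕ) < n - 1 ∧ (j : ℕ) < n - 1
      then Ltil⁻¹ ⟨i, h.1⟩ ⟨j, h.2⟩ else 0)
    (R : Matrix (Fin n) (Fin n) ℝ)
    (hR : ∀ i j, R i j = Linv i i + Linv j j - 2 * Linv i j) :
    (Matrix.det (Matrix.of fun i j : Fin n =>
        (Polynomial.X : Polynomial ℝ) - Polynomial.C (R i j / 2))).coeff 1
      = 1 / Ltil.det := by
  obtain ⟨m, rfl⟩ : ∃ m, n = m + 1 := ⟨n - 1, (Nat.succ_pred_eq_of_pos (by omega)).symm⟩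
  set lst : Fin (m+1) := Fin.last m with hlst
  -- Linv vanishes on last row/column
  have hLz : ∀ i j : Fin (m+1), i = lst ∨ j = lst → Linv i j = 0 := by
    intro i j h
    rw [hLinv, dif_neg]
    rintro ⟨h1, h2⟩
    rcases h with h | h <;> subst h <;> simp [hlst, Fin.last] at h1 h2 <;> omega
  -- Linv on interior equals Ltil⁻¹
  have hLint : ∀ (i j : Fin m), Linv (Fin.castAdd 1 i) (Fin.castAdd 1 j) = Ltil⁻¹ i j := by
    intro i j
    rw [hLinv, dif_pos]
    · congr 1 <;> exact Fin.ext rfl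
    · exact ⟨by simpa using i.isLt, by simpa using j.isLt⟩
  set M : Matrix (Fin (m+1)) (Fin (m+1)) ℝ[X] :=
    Matrix.of (fun i j : Fin (m+1) => (X : ℝ[X]) - C (R i j / 2)) with hM
  set P : Matrix (Fin (m+1)) (Fin (m+1)) ℝ[X] :=
    Matrix.of (fun i j : Fin (m+1) =>
      if i = j then 1 else if j = lst then -1 else 0) with hPdef
  have hP' : ∀ i k : Fin (m+1),
      P i k = (if i = k then 1 else 0) - (if i ≠ lst ∧ k = lst then 1 else 0) := by
    intro i k
    by_cases h1 : i = k <;> by_cases h2 : k = lst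
    · simp [hPdef, h1, h2]
    · simp [hPdef, h1, h2]
    · have h3 : i ≠ lst := fun h => h1 (h.trans h2.symm)
      simp [hPdef, h1, h2, h3]
    · simp [hPdef, h1, h2]
  have hrowop : ∀ (v : Fin (m+1) → ℝ[X]) (i : Fin (m+1)),
      ∑ k, P i k * v k = v i - if i = lst then 0 else v lst := by
    intro v i
    simp only [hP', sub_mul, ite_mul, one_mul, zero_mul]
    rw [Finset.sum_sub_distrib]
    congr 1
    · simp [Finset.sum_ite_eq]
    · by_cases h : i = lst <;> simp [h, Finset.sum_ite_eq']
  have hPdet : P.det = 1 := by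
    have ht : P.BlockTriangular id := by
      intro i j hij
      simp only [id] at hij
      have h1 : i ≠ j := ne_of_gt hij
      have h2 : j ≠ lst := by
        intro h; subst h; exact absurd hij (by simpa using not_lt.mpr (Fin.le_last i))
      simp [hPdef, h1, h2]
    rw [Matrix.det_of_upperTriangular ht]
    simp [hPdef]
  have hN : ∀ i j, (P * M * Pᵀ) i j =
      (M i j - if i = lst then 0 else M lst j)
        - (if j = lst then 0
            else (M i lst - if i = lst then 0 else M lst lst)) := by
    intro i j
    have h1 : ∀ l, (P * M) i l = M i l - if i = lst then 0 else M lst l := by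
      intro l
      rw [Matrix.mul_apply, hrowop (fun k => M k l) i]
    rw [Matrix.mul_apply]
    simp only [Matrix.transpose_apply]
    calc ∑ l, (P * M) i l * P j l = ∑ l, P j l * (P * M) i l := by
          simp [mul_comm]
      _ = (P * M) i j - if j = lst then 0 else (P * M) i lst :=
          hrowop (fun l => (P * M) i l) j
      _ = _ := by rw [h1, h1]
  -- the real matrix B
  set B : Matrix (Fin (m+1)) (Fin (m+1)) ℝ :=
    Matrix.of (fun i j : Fin (m+1) =>
      if i = lst then (if j = lst then 0 else -(Linv j j)/2)
      else (if j = lst then -(Linv i i)/2 else Linv i j)) with hB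
  have hNB : P * M * Pᵀ = Matrix.updateRow (B.map C) lst
      ((fun j => C (B lst j)) + Pi.single lst X) := by
    refine Matrix.ext fun i j => ?_
    rw [hN i j]
    by_cases hi : i = lst <;> by_cases hj : j = lst
    · subst hi; subst hj
      have h0 : R lst lst = 0 := by rw [hR, hLz lst lst (Or.inl rfl)]; ring
      have e0 : B lst lst = 0 := by simp [hB]
      rw [Matrix.updateRow_self]
      simp only [Pi.add_apply, Pi.single_eq_same, e0, map_zero, zero_add,
        eq_self_iff_true, if_true, h0, hM, Matrix.of_apply, sub_zero]
      norm_num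
    · subst hi
      have e1 : B lst j = R lst lst / 2 - R lst j / 2 := by
        simp only [hB, Matrix.of_apply, eq_self_iff_true, if_true, if_neg hj]
        rw [hR, hR, hLz lst lst (Or.inl rfl), hLz lst j (Or.inl rfl)]; ring
      rw [Matrix.updateRow_self]
      simp only [Pi.add_apply, Pi.single_apply, if_neg hj, eq_self_iff_true, if_true, e1,
        map_sub, hM, Matrix.of_apply]
      ring
    · subst hj
      have e1 : B i lst = R lst lst / 2 - R i lst / 2 := by
        simp only [hB, Matrix.of_apply, if_neg hi, eq_self_iff_true, if_true]
        rw [hR, hR, hLz lst lst (Or.inl rfl), hLz i lst (Or.inr rfl)]; ring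
      rw [Matrix.updateRow_ne hi]
      simp only [Matrix.map_apply, e1, map_sub, hM, Matrix.of_apply,
        if_neg hi, eq_self_iff_true, if_true]
      ring
    · have e1 : B i j = R lst j / 2 + R i lst / 2 - R i j / 2 - R lst lst / 2 := by
        simp only [hB, Matrix.of_apply, if_neg hi, if_neg hj]
        rw [hR, hR, hR, hR, hLz lst lst (Or.inl rfl), hLz lst j (Or.inl rfl),
          hLz i lst (Or.inr rfl)]
        ring
      rw [Matrix.updateRow_ne hi]
      simp only [Matrix.map_apply, e1, map_sub, map_add, hM, Matrix.of_apply,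
        if_neg hi, if_neg hj]
      ring
  -- determinant computation
  have hdet : M.det = (P * M * Pᵀ).det := by
    rw [Matrix.det_mul, Matrix.det_mul, hPdet, Matrix.det_transpose, hPdet]
    ring
  set B' : Matrix (Fin (m+1)) (Fin (m+1)) ℝ :=
    Matrix.updateRow B lst (Pi.single lst 1) with hB'
  have hsingle : (Pi.single lst (X : ℝ[X]) : Fin (m+1) → ℝ[X])
      = (X : ℝ[X]) • (Pi.single lst 1 : Fin (m+1) → ℝ[X]) := by
    ext j
    by_cases h : j = lst <;> simp [Pi.single_apply, h]
  have hmapupd : Matrix.updateRow (B.map C) lst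
      (Pi.single lst 1 : Fin (m+1) → ℝ[X]) = B'.map C := by
    ext i j
    by_cases h : i = lst
    · subst h
      simp [hB', Pi.single_apply, apply_ite C]
    · simp [hB', Matrix.updateRow_ne h]
  have hrow1 : (fun j => C (B lst j)) = (B.map C) lst := by
    ext j; simp
  have hdet2 : M.det = C B.det + X * C B'.det := by
    rw [hdet, hNB, Matrix.det_updateRow_add, hrow1, Matrix.updateRow_eq_self,
      hsingle, Matrix.det_updateRow_smul, hmapupd, ← RingHom.mapMatrix_apply, ← RingHom.mapMatrix_apply,
      ← RingHom.map_det, ← RingHom.map_det]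
  have hcoeff : M.det.coeff 1 = B'.det := by
    rw [hdet2]
    simp [coeff_C, coeff_C_mul, coeff_X_one]
  -- compute det B'
  have hBdet : B'.det = Ltil⁻¹.det := by
    rw [← Matrix.det_submatrix_equiv_self (finSumFinEquiv : Fin m ⊕ Fin 1 ≃ Fin (m+1)) B']
    have heq : B'.submatrix finSumFinEquiv finSumFinEquiv
        = Matrix.fromBlocks Ltil⁻¹
            (Matrix.of fun i (_ : Fin 1) => -(Linv (Fin.castAdd 1 i) (Fin.castAdd 1 i))/2)
            0 1 := by
      ext (i | i) (j | j)
      · have hi : Fin.castAdd 1 i ≠ lst := by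
          simp [hlst, Fin.ext_iff] <;> omega
        simp only [Matrix.submatrix_apply, finSumFinEquiv_apply_left, hB',
          Matrix.updateRow_ne hi, Matrix.fromBlocks_apply₁₁]
        simp only [hB, Matrix.of_apply, if_neg hi]
        have hj : Fin.castAdd 1 j ≠ lst := by
          simp [hlst, Fin.ext_iff] <;> omega
        rw [if_neg hj, hLint]
      · have hi : Fin.castAdd 1 i ≠ lst := by
          simp [hlst, Fin.ext_iff] <;> omega
        have hj : finSumFinEquiv (Sum.inr j) = lst := by
          simp [hlst, Fin.ext_iff, Fin.natAdd] <;> omega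
        simp only [Matrix.submatrix_apply, finSumFinEquiv_apply_left, hj, hB',
          Matrix.updateRow_ne hi, Matrix.fromBlocks_apply₁₂]
        simp [hB, if_neg hi]
      · have hi : finSumFinEquiv (Sum.inr i) = lst := by
          simp [hlst, Fin.ext_iff, Fin.natAdd] <;> omega
        have hj : Fin.castAdd 1 j ≠ lst := by
          simp [hlst, Fin.ext_iff] <;> omega
        simp only [Matrix.submatrix_apply, finSumFinEquiv_apply_right,
          finSumFinEquiv_apply_left, hi, hB', Matrix.updateRow_self,
          Matrix.fromBlocks_apply₂₁]
        simp [Pi.single_apply, hj]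
      · have hi : finSumFinEquiv (Sum.inr i) = lst := by
          simp [hlst, Fin.ext_iff, Fin.natAdd] <;> omega
        simp only [Matrix.submatrix_apply, finSumFinEquiv_apply_right, hi, hB',
          Matrix.updateRow_self, Matrix.fromBlocks_apply₂₂]
        have hj : Fin.natAdd m j = lst := by
          simp [hlst, Fin.ext_iff, Fin.natAdd] <;> omega
        simp [Pi.single_apply, hj, Matrix.one_apply, Subsingleton.elim i j]
    rw [heq, Matrix.det_fromBlocks_zero₂₁]
    simp
  have hfin : Ltil⁻¹.det = 1 / Ltil.det := by
    rw [Matrix.det_nonsing_inv, Ring.inverse_eq_inv', one_div]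
  rw [hM] at hcoeff
  rw [hcoeff, hBdet, hfin]
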